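/- (Soundness and completeness of the piecewise-linear activation encoding, Model 1.) Let M_0 < M_1 < ⋯ < M_n and let σ : [M_0, M_n] → ℝ be a piecewise-linear function satisfying σ(z) = α_i z + γ_i for all z ∈ [M_{i−1}, M_i] and each i = 1,…,n (so the pieces agree at breakpoints). Then for every z ∈ [M_0, M_n] and a ∈ ℝ: a = σ(z) if and only if there exist β ∈ {0,1}^n and u ∈ ℝ^n such that Σ_{i=1}^n β_i = 1, Σ_{i=1}^n M_{i−1} β_i ≤ z ≤ Σ_{i=1}^n M_i β_i, u_i = β_i z for all i, and a = Σ_{i=1}^n (α_i u_i + γ_i β_i). -/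

import Mathlib

lemma exists_seg : ∀ (n : ℕ), 0 < n → ∀ (M : Fin (n+1) → ℝ) (z : ℝ),
    M 0 ≤ z → z ≤ M (Fin.last n) → ∃ i : Fin n, M i.castSucc ≤ z ∧ z ≤ M i.succ := by
  intro n
  induction n with
  | zero => intro h; exact absurd h (lt_irrefl 0)
  | succ m ih =>
    intro _ M z h0 hl
    rcases Nat.eq_zero_or_pos m with rfl | hm
    · exact ⟨0, h0, hl⟩
    · by_cases hc : z ≤ M (Fin.last m).castSucc
      · have h0' : (M ∘ Fin.castSucc) 0 ≤ z := h0
        obtain ⟨i, h1, h2⟩ := ih hm (M ∘ Fin.castSucc) z h0' hc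
        refine ⟨i.castSucc, ?_, ?_⟩
        · simpa using h1
        · exact h2
      · exact ⟨Fin.last m, le_of_lt (lt_of_not_ge hc), by simpa using hl⟩

/-- Soundness and completeness of the piecewise-linear activation encoding (Model 1):
for a piecewise-linear `σ` on `[M_0, M_n]` with `σ(z) = α_i z + γ_i` on each segment
`[M_{i−1}, M_i]`, and `z ∈ [M_0, M_n]`, one has `a = σ(z)` iff there exist binary segment
selectors `β ∈ {0,1}^n` with `Σ_i β_i = 1`, `Σ_i M_{i−1} β_i ≤ z ≤ Σ_i M_i β_i`, and
auxiliary variables `u_i = β_i z`, such that `a = Σ_i (α_i u_i + γ_i β_i)`. -/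
theorem pwl_encoding_sound_complete (nseg : ℕ) (hn : 0 < nseg)
    (M : Fin (nseg + 1) → ℝ) (hM : StrictMono M)
    (α γ : Fin nseg → ℝ) (σ : ℝ → ℝ)
    (hσ : ∀ i : Fin nseg, ∀ z ∈ Set.Icc (M i.castSucc) (M i.succ), σ z = α i * z + γ i)
    (z : ℝ) (hz : z ∈ Set.Icc (M 0) (M (Fin.last nseg))) (a : ℝ) :
    a = σ z ↔
      ∃ β u : Fin nseg → ℝ,
        (∀ i, β i = 0 ∨ β i = 1) ∧
        (∑ i, β i = 1) ∧
        (∑ i, M i.castSucc * β i ≤ z) ∧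
        (z ≤ ∑ i, M i.succ * β i) ∧
        (∀ i, u i = β i * z) ∧
        a = ∑ i, (α i * u i + γ i * β i) := by
  constructor
  · rintro rfl
    obtain ⟨i, h1, h2⟩ := exists_seg nseg hn M z hz.1 hz.2
    refine ⟨fun k => if k = i then 1 else 0, fun k => if k = i then z else 0,
      fun k => by by_cases h : k = i <;> simp [h], by simp, ?_, ?_, fun k => by
        by_cases h : k = i <;> simp [h], ?_⟩
    · simpa [mul_ite, Finset.sum_ite_eq'] using h1
    · simpa [mul_ite, Finset.sum_ite_eq'] using h2
    · rw [hσ i z ⟨h1, h2⟩]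
      rw [Finset.sum_eq_single i (fun k _ hk => by simp [hk]) (fun h => absurd (Finset.mem_univ i) h)]
      simp [add_comm]
  · rintro ⟨β, u, hbin, hsum, hlo, hhi, hu, ha⟩
    have hne : ∃ j, β j = 1 := by
      by_contra h
      push_neg at h
      have : ∀ j ∈ Finset.univ, β j = 0 := fun j _ => (hbin j).resolve_right (h j)
      rw [Finset.sum_eq_zero this] at hsum
      norm_num at hsum
    obtain ⟨j, hj⟩ := hne
    have hz0 : ∀ k, k ≠ j → β k = 0 := by
      intro k hk
      by_contra hk0
      have hk1 : β k = 1 := (hbin k).resolve_left hk0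
      have h2 : (2:ℝ) ≤ ∑ i, β i := by
        have : ({k, j} : Finset (Fin nseg)).sum β = 2 := by
          rw [Finset.sum_pair hk]; rw [hj, hk1]; norm_num
        calc (2:ℝ) = ({k, j} : Finset (Fin nseg)).sum β := this.symm
          _ ≤ ∑ i, β i := Finset.sum_le_sum_of_subset_of_nonneg (Finset.subset_univ _)
              (fun i _ _ => by rcases hbin i with h | h <;> simp [h])
      rw [hsum] at h2; norm_num at h2
    have sumeq : ∀ f : Fin nseg → ℝ, (∑ i, f i * β i) = f j := by
      intro f
      rw [Finset.sum_eq_single j (fun k _ hk => by rw [hz0 k hk, mul_zero])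
        (fun h => absurd (Finset.mem_univ j) h)]
      rw [hj, mul_one]
    have h1 : M j.castSucc ≤ z := by rw [sumeq (fun i => M i.castSucc)] at hlo; exact hlo
    have h2 : z ≤ M j.succ := by rw [sumeq (fun i => M i.succ)] at hhi; exact hhi
    rw [ha, hσ j z ⟨h1, h2⟩]
    rw [Finset.sum_eq_single j (fun k _ hk => by rw [hz0 k hk, hu k, hz0 k hk]; ring)
      (fun h => absurd (Finset.mem_univ j) h)]
    rw [hu j, hj]; ring
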